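/- Let A be a category with finite products and finite coproducts, equipped with a natural family of isomorphisms ψ_{Y,Z} : Y + Z ≅ Y × Z. Then A is semi-additive: A is pointed, and the canonical map α_{Y,Z} : Y + Z → Y × Z (with components the identities and zero morphisms) is an isomorphism for all Y, Z. -/

import Mathlib

open CategoryTheory CategoryTheory.Limits

/-- The zero morphism `Y ⟶ Z` in a pointed category (initial object also terminal). -/
noncomputable def zeroMor {A : Type*} [Category A] [HasInitial A] [HasTerminal A]
    (pointed : IsIso (terminal.from (⊥_ A))) (Y Z : A) : Y ⟶ Z :=
  terminal.from Y ≫ inv (terminal.from (⊥_ A)) ≫ initial.to Z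

/-- The canonical map `Y + Z ⟶ Y × Z` in a pointed category. -/
noncomputable def alphaMap {A : Type*} [Category A] [HasFiniteProducts A] [HasFiniteCoproducts A]
    (pointed : IsIso (terminal.from (⊥_ A))) (Y Z : A) : Y ⨿ Z ⟶ Y ⨯ Z :=
  coprod.desc (prod.lift (𝟙 Y) (zeroMor pointed Y Z)) (prod.lift (zeroMor pointed Z Y) (𝟙 Z))

set_option maxHeartbeats 1000000 in
theorem stmt_13 {A : Type*} [Category A] [HasFiniteProducts A] [HasFiniteCoproducts A]
    (ψ : ∀ Y Z : A, Y ⨿ Z ≅ Y ⨯ Z)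
    (nat : ∀ {Y Y' Z Z' : A} (g : Y ⟶ Y') (h : Z ⟶ Z'),
      coprod.map g h ≫ (ψ Y' Z').hom = (ψ Y Z).hom ≫ prod.map g h) :
    ∃ pointed : IsIso (terminal.from (⊥_ A)),
      ∀ Y Z : A, IsIso (alphaMap pointed Y Z) := by
  -- a morphism from the terminal to the initial object
  let f : ⊤_ A ⟶ ⊥_ A := coprod.inr ≫ (ψ (⊥_ A) (⊤_ A)).hom ≫ prod.fst
  have pointed : IsIso (terminal.from (⊥_ A)) :=
    ⟨f, initialIsInitial.hom_ext _ _, terminalIsTerminal.hom_ext _ _⟩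
  refine ⟨pointed, ?_⟩
  have botTerminal : IsTerminal (⊥_ A) :=
    IsTerminal.ofIso terminalIsTerminal (asIso (terminal.from (⊥_ A))).symm
  -- zero morphism composition lemmas
  have zc : ∀ {Y Z Z' : A} (g : Z ⟶ Z'),
      zeroMor pointed Y Z ≫ g = zeroMor pointed Y Z' := by
    intro Y Z Z' g; simp [zeroMor]
  have cz : ∀ {X Y Z : A} (g : X ⟶ Y),
      g ≫ zeroMor pointed Y Z = zeroMor pointed X Z := by
    intro X Y Z g
    simp only [zeroMor, ← Category.assoc, terminal.comp_from]
  have factor_zero : ∀ {Y Z : A} (p : Y ⟶ ⊥_ A),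
      p ≫ initial.to Z = zeroMor pointed Y Z := by
    intro Y Z p
    have hp : p = terminal.from Y ≫ inv (terminal.from (⊥_ A)) := botTerminal.hom_ext _ _
    rw [hp, zeroMor, Category.assoc]
  -- diagonal entries of ψ
  let x : ∀ Y : A, Y ⟶ Y := fun Y =>
    coprod.inl ≫ (ψ Y (⊥_ A)).hom ≫ prod.fst
  let w : ∀ Z : A, Z ⟶ Z := fun Z =>
    coprod.inr ≫ (ψ (⊥_ A) Z).hom ≫ prod.snd
  -- matrix form of ψ
  have hl : ∀ Y Z : A, (coprod.inl ≫ (ψ Y Z).hom : Y ⟶ Y ⨯ Z) =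
      prod.lift (x Y) (zeroMor pointed Y Z) := by
    intro Y Z
    have h := nat (𝟙 Y) (initial.to Z)
    have h1 : coprod.inl ≫ (ψ Y Z).hom
        = coprod.inl ≫ (ψ Y (⊥_ A)).hom ≫ prod.map (𝟙 Y) (initial.to Z) := by
      rw [← h]; simp
    rw [h1]
    apply Limits.prod.hom_ext
    · simp [x]
      exact (prod.lift_fst _ _).symm
    · simp only [Category.assoc, prod.map_snd, prod.lift_snd]
      rw [← factor_zero (coprod.inl ≫ (ψ Y (⊥_ A)).hom ≫ prod.snd)]
      simp only [Category.assoc]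
  have hr : ∀ Y Z : A, (coprod.inr ≫ (ψ Y Z).hom : Z ⟶ Y ⨯ Z) =
      prod.lift (zeroMor pointed Z Y) (w Z) := by
    intro Y Z
    have h := nat (initial.to Y) (𝟙 Z)
    have h1 : coprod.inr ≫ (ψ Y Z).hom
        = coprod.inr ≫ (ψ (⊥_ A) Z).hom ≫ prod.map (initial.to Y) (𝟙 Z) := by
      rw [← h]; simp
    rw [h1]
    apply Limits.prod.hom_ext
    · simp only [Category.assoc, prod.map_fst, prod.lift_fst]
      rw [← factor_zero (coprod.inr ≫ (ψ (⊥_ A) Z).hom ≫ prod.fst)]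
      simp only [Category.assoc]
    · simp [w]
      exact (prod.lift_snd _ _).symm
  -- diagonal entries are isomorphisms
  have iso_inl : ∀ Y : A, IsIso (coprod.inl : Y ⟶ Y ⨿ ⊥_ A) := by
    intro Y
    refine ⟨coprod.desc (𝟙 Y) (initial.to Y), by exact coprod.inl_desc _ _, ?_⟩
    apply coprod.hom_ext
    · simp
      exact coprod.inl_desc _ _
    · exact initialIsInitial.hom_ext _ _
  have iso_fst : ∀ Y : A, IsIso (prod.fst : Y ⨯ ⊥_ A ⟶ Y) := by
    intro Y
    refine ⟨prod.lift (𝟙 Y) (zeroMor pointed Y (⊥_ A)), ?_, by exact prod.lift_fst _ _⟩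
    apply Limits.prod.hom_ext
    · simp
      exact prod.lift_fst _ _
    · exact botTerminal.hom_ext _ _
  have iso_inr : ∀ Z : A, IsIso (coprod.inr : Z ⟶ (⊥_ A) ⨿ Z) := by
    intro Z
    refine ⟨coprod.desc (initial.to Z) (𝟙 Z), by exact coprod.inr_desc _ _, ?_⟩
    apply coprod.hom_ext
    · exact initialIsInitial.hom_ext _ _
    · simp
      exact coprod.inr_desc _ _
  have iso_snd : ∀ Z : A, IsIso (prod.snd : (⊥_ A) ⨯ Z ⟶ Z) := by
    intro Z
    refine ⟨prod.lift (zeroMor pointed Z (⊥_ A)) (𝟙 Z), ?_, by exact prod.lift_snd _ _⟩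
    apply Limits.prod.hom_ext
    · exact botTerminal.hom_ext _ _
    · simp
      exact prod.lift_snd _ _
  have iso_x : ∀ Y : A, IsIso (x Y) := by
    intro Y
    haveI := iso_inl Y; haveI := iso_fst Y
    exact inferInstanceAs (IsIso (coprod.inl ≫ (ψ Y (⊥_ A)).hom ≫ prod.fst))
  have iso_w : ∀ Z : A, IsIso (w Z) := by
    intro Z
    haveI := iso_inr Z; haveI := iso_snd Z
    exact inferInstanceAs (IsIso (coprod.inr ≫ (ψ (⊥_ A) Z).hom ≫ prod.snd))
  intro Y Z
  -- ψ = α ≫ prod.map x w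
  have ψeq : (ψ Y Z).hom = alphaMap pointed Y Z ≫ prod.map (x Y) (w Z) := by
    apply coprod.hom_ext
    · rw [hl Y Z]
      simp only [alphaMap, coprod.inl_desc_assoc, prod.lift_map]
      rw [zc]
      simp
    · rw [hr Y Z]
      simp only [alphaMap, coprod.inr_desc_assoc, prod.lift_map]
      rw [zc]
      simp
  haveI := iso_x Y; haveI := iso_w Z
  have αeq : alphaMap pointed Y Z = (ψ Y Z).hom ≫ inv (prod.map (x Y) (w Z)) := by
    rw [ψeq]; simp
  rw [αeq]
  infer_instance
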